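/- Let (X,d) be a Robinson space and δ > 0 be such that the graph G_δ is not connected. Then at most one connected component of G_δ fails to be a block of (X,d), and every connected component of G_δ that is a block has diameter at most δ. -/

import Mathlib

structure Dissim (X : Type*) where
  d : X → X → ℝ
  symm : ∀ x y, d x y = d y x
  nonneg : ∀ x y, 0 ≤ d x y
  self : ∀ x, d x x = 0

variable {X : Type*}

def Compatible (D : Dissim X) (lt : X → X → Prop) : Prop :=
  ∀ x y z : X, lt x y → lt y z → D.d x y ≤ D.d x z ∧ D.d y z ≤ D.d x z

def IsCompatOrder (D : Dissim X) (lt : X → X → Prop) : Prop :=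
  IsStrictTotalOrder X lt ∧ Compatible D lt

def Robinson (D : Dissim X) : Prop :=
  ∃ lt : X → X → Prop, IsCompatOrder D lt

def IsMmodule (D : Dissim X) (M : Set X) : Prop :=
  ∀ z ∉ M, ∀ x ∈ M, ∀ y ∈ M, D.d z x = D.d z y

def IsInterval (lt : X → X → Prop) (I : Set X) : Prop :=
  ∀ a b c : X, lt a b → lt b c → a ∈ I → c ∈ I → b ∈ I

def IsBlock (D : Dissim X) (Y : Set X) : Prop :=
  ∀ lt : X → X → Prop, IsCompatOrder D lt → IsInterval lt Y

noncomputable def diam (D : Dissim X) (Y : Set X) : ℝ :=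
  sSup (Set.image2 D.d Y Y)

def Gdelta (D : Dissim X) (δ : ℝ) : SimpleGraph X where
  Adj x y := x ≠ y ∧ D.d x y ≠ δ
  symm := ⟨by
    rintro x y ⟨hxy, hd⟩
    exact ⟨hxy.symm, by rw [D.symm]; exact hd⟩⟩
  loopless := ⟨by rintro x ⟨h, -⟩; exact h rfl⟩

def Gle (D : Dissim X) (δ : ℝ) : SimpleGraph X where
  Adj x y := x ≠ y ∧ D.d x y ≤ δ
  symm := ⟨by
    rintro x y ⟨hxy, hd⟩
    exact ⟨hxy.symm, by rw [D.symm]; exact hd⟩⟩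
  loopless := ⟨by rintro x ⟨h, -⟩; exact h rfl⟩

def Glt (D : Dissim X) (δ : ℝ) : SimpleGraph X where
  Adj x y := x ≠ y ∧ D.d x y < δ
  symm := ⟨by
    rintro x y ⟨hxy, hd⟩
    exact ⟨hxy.symm, by rw [D.symm]; exact hd⟩⟩
  loopless := ⟨by rintro x ⟨h, -⟩; exact h rfl⟩

def IsCompOf {V : Type*} (G : SimpleGraph V) (C : Set V) : Prop :=
  ∃ x : V, C = {y | G.Reachable x y}

def MMax (D : Dissim X) : Set (Set X) :=
  {M | IsMmodule D M ∧ M ≠ Set.univ ∧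
    ∀ M' : Set X, IsMmodule D M' → M' ≠ Set.univ → M ⊆ M' → M = M'}

def IsPartition {α : Type*} (P : Set (Set α)) : Prop :=
  (∀ A ∈ P, A.Nonempty) ∧
  (∀ A ∈ P, ∀ B ∈ P, A ≠ B → Disjoint A B) ∧
  ⋃₀ P = Set.univ

def IsCopartition {α : Type*} (P : Set (Set α)) : Prop :=
  IsPartition ((fun M => Mᶜ) '' P)

def SimpleGraph.restrictTo {V : Type*} (G : SimpleGraph V) (S : Set V) : SimpleGraph V where
  Adj x y := x ∈ S ∧ y ∈ S ∧ G.Adj x y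
  symm := ⟨by rintro x y ⟨hx, hy, h⟩; exact ⟨hy, hx, h.symm⟩⟩
  loopless := ⟨by rintro x ⟨-, -, h⟩; exact G.irrefl h⟩

def ConnectedWithin {V : Type*} (G : SimpleGraph V) (S : Set V) : Prop :=
  S.Nonempty ∧ ∀ x ∈ S, ∀ y ∈ S, (G.restrictTo S).Reachable x y

def IsCompWithin {V : Type*} (G : SimpleGraph V) (S : Set V) (C : Set V) : Prop :=
  ∃ x ∈ S, C = {y | (G.restrictTo S).Reachable x y}

def IsStrictTotalOrderOn {α : Type*} (S : Set α) (lt : α → α → Prop) : Prop :=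
  (∀ x ∈ S, ¬ lt x x) ∧
  (∀ x ∈ S, ∀ y ∈ S, ∀ z ∈ S, lt x y → lt y z → lt x z) ∧
  (∀ x ∈ S, ∀ y ∈ S, x ≠ y → (lt x y ∨ lt y x) ∧ ¬ (lt x y ∧ lt y x))

def CompatibleOn (D : Dissim X) (S : Set X) (lt : X → X → Prop) : Prop :=
  ∀ x ∈ S, ∀ y ∈ S, ∀ z ∈ S, lt x y → lt y z → D.d x y ≤ D.d x z ∧ D.d y z ≤ D.d x z

def IsCompatOrderOn (D : Dissim X) (S : Set X) (lt : X → X → Prop) : Prop :=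
  IsStrictTotalOrderOn S lt ∧ CompatibleOn D S lt

def FlatOn (D : Dissim X) (S : Set X) : Prop :=
  ∃ lt : X → X → Prop, IsCompatOrderOn D S lt ∧ (∃ x ∈ S, ∃ y ∈ S, lt x y) ∧
    ∀ lt' : X → X → Prop, IsCompatOrderOn D S lt' →
      (∀ x ∈ S, ∀ y ∈ S, (lt' x y ↔ lt x y)) ∨ (∀ x ∈ S, ∀ y ∈ S, (lt' x y ↔ lt y x))

def Flat (D : Dissim X) : Prop :=
  ∃ lt : X → X → Prop, IsCompatOrder D lt ∧ (∃ x y : X, lt x y) ∧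
    ∀ lt' : X → X → Prop, IsCompatOrder D lt' →
      (∀ x y : X, lt' x y ↔ lt x y) ∨ (∀ x y : X, lt' x y ↔ lt y x)

def IsCopointAt (D : Dissim X) (p : X) (C : Set X) : Prop :=
  IsMmodule D C ∧ C.Nonempty ∧ p ∉ C ∧
  ∀ C' : Set X, IsMmodule D C' → p ∉ C' → C ⊆ C' → C = C'

def bigGraph (D : Dissim X) (δ : ℝ) (I : Set (Set X)) : SimpleGraph (Set X) where
  Adj C C' := C ∈ I ∧ C' ∈ I ∧ C ≠ C' ∧ ∃ x ∈ C, ∃ y ∈ C', δ < D.d x y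
  symm := ⟨by
    rintro C C' ⟨hC, hC', hne, x, hx, y, hy, hd⟩
    exact ⟨hC', hC, hne.symm, y, hy, x, hx, by rw [D.symm]; exact hd⟩⟩
  loopless := ⟨by rintro C ⟨-, -, hne, -⟩; exact hne rfl⟩

section Stmt4Aux

lemma aux_cross (D : Dissim X) (δ : ℝ) {x₀ z x : X}
    (hx : (Gdelta D δ).Reachable x₀ x) (hz : ¬ (Gdelta D δ).Reachable x₀ z) :
    D.d x z = δ := by
  by_contra h
  have hxz : x ≠ z := by rintro rfl; exact hz hx
  exact hz (hx.trans (SimpleGraph.Adj.reachable (⟨hxz, h⟩ : (Gdelta D δ).Adj x z)))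

lemma aux_outside [Nonempty X] {G : SimpleGraph X} (hnc : ¬ G.Connected) (x₀ : X) :
    ∃ z, ¬ G.Reachable x₀ z := by
  by_contra h
  push_neg at h
  exact hnc ⟨fun a b => (h a).symm.trans (h b)⟩

lemma aux_between {D : Dissim X} {lt : X → X → Prop} (hcomp : Compatible D lt)
    (htri : ∀ x y : X, x ≠ y → lt x y ∨ lt y x)
    {δ : ℝ} (hδ : 0 < δ)
    {u v z : X} (hdu : D.d z u = δ) (hdv : D.d z v = δ)
    (huv : δ < D.d u v) :
    (lt u z ∧ lt z v) ∨ (lt v z ∧ lt z u) := by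
  have huvne : u ≠ v := by
    rintro rfl; rw [D.self] at huv; linarith
  have hzu : z ≠ u := by
    rintro rfl; rw [hdv] at huv; exact lt_irrefl _ huv
  have hzv : z ≠ v := by
    rintro rfl; rw [D.symm, hdu] at huv; exact lt_irrefl _ huv
  rcases htri u v huvne with h | h
  · rcases htri z u hzu with h1 | h1
    · have := (hcomp z u v h1 h).2
      rw [hdv] at this; linarith
    · rcases htri z v hzv with h2 | h2
      · exact Or.inl ⟨h1, h2⟩
      · have := (hcomp u v z h h2).1
        rw [D.symm u z, hdu] at this; linarith
  · rcases htri z v hzv with h1 | h1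
    · have := (hcomp z v u h1 h).2
      rw [hdu, D.symm v u] at this; linarith
    · rcases htri z u hzu with h2 | h2
      · exact Or.inr ⟨h1, h2⟩
      · have := (hcomp v u z h h2).1
        rw [D.symm v u, D.symm v z, hdv] at this; linarith

lemma aux_walk {G : SimpleGraph X} {C : Set X}
    (hCadj : ∀ ⦃u v : X⦄, u ∈ C → G.Adj u v → v ∈ C)
    {lt : X → X → Prop}
    (htri : ∀ x y : X, x ≠ y → lt x y ∨ lt y x)
    (htrans : ∀ x y z : X, lt x y → lt y z → lt x z)
    (hirr : ∀ x : X, ¬ lt x x)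
    {b : X} (hb : b ∉ C) :
    ∀ {a c : X}, G.Walk a c → a ∈ C → lt a b → lt b c →
      ∃ u v : X, u ∈ C ∧ G.Adj u v ∧ lt u b ∧ lt b v := by
  intro a c w
  induction w with
  | nil => intro _ hab hba; exact absurd (htrans _ _ _ hab hba) (hirr _)
  | @cons a x c h p ih =>
    intro haC hab hbc
    have hxC : x ∈ C := hCadj haC h
    have hxb : x ≠ b := fun e => hb (e ▸ hxC)
    rcases htri x b hxb with h1 | h1
    · exact ih hxC h1 hbc
    · exact ⟨a, x, haC, h, hab, h1⟩

lemma aux_block_of_small (D : Dissim X) {δ : ℝ} {x₀ : X}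
    (hsmall : ∀ u ∈ {y | (Gdelta D δ).Reachable x₀ y},
      ∀ v ∈ {y | (Gdelta D δ).Reachable x₀ y}, D.d u v ≤ δ) :
    IsBlock D {y | (Gdelta D δ).Reachable x₀ y} := by
  rintro lt ⟨hsto, hcomp⟩ a b c hab hbc ha hc
  by_contra hb
  haveI := hsto
  have htri : ∀ x y : X, x ≠ y → lt x y ∨ lt y x := fun x y h => by
    rcases trichotomous_of lt x y with h' | h' | h'
    · exact Or.inl h'
    · exact absurd h' h
    · exact Or.inr h'
  have htrans : ∀ x y z : X, lt x y → lt y z → lt x z := fun _ _ _ h1 h2 => trans_of lt h1 h2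
  have hirr : ∀ x : X, ¬ lt x x := fun x => irrefl_of lt x
  have hCadj : ∀ ⦃u v : X⦄, u ∈ {y | (Gdelta D δ).Reachable x₀ y} → (Gdelta D δ).Adj u v →
      v ∈ {y | (Gdelta D δ).Reachable x₀ y} := fun u v hu h => hu.trans h.reachable
  have hac : (Gdelta D δ).Reachable a c := (Set.mem_setOf_eq ▸ ha).symm.trans hc
  obtain ⟨w⟩ := hac
  obtain ⟨u, v, huC, hadj, hub, hbv⟩ := aux_walk hCadj htri htrans hirr hb w ha hab hbc
  have hvC : v ∈ {y | (Gdelta D δ).Reachable x₀ y} := hCadj huC hadj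
  have hdub : D.d u b = δ := aux_cross D δ huC hb
  have h1 := (hcomp u b v hub hbv).1
  have hlt : D.d u v < δ := lt_of_le_of_ne (hsmall u huC v hvC) hadj.2
  rw [hdub] at h1; linarith

end Stmt4Aux

/-- in a Robinson space with G_δ disconnected, at most one component of
G_δ is not a block, and every component that is a block has diameter at most δ. -/
theorem stmt4 [Fintype X] [Nonempty X] (D : Dissim X)
    (hRob : Robinson D)
    (δ : ℝ) (hδ : 0 < δ)
    (hnc : ¬ (Gdelta D δ).Connected) :
    (∀ C₁ C₂ : Set X, IsCompOf (Gdelta D δ) C₁ → IsCompOf (Gdelta D δ) C₂ →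
      ¬ IsBlock D C₁ → ¬ IsBlock D C₂ → C₁ = C₂) ∧
    (∀ C : Set X, IsCompOf (Gdelta D δ) C → IsBlock D C → diam D C ≤ δ) := by
  obtain ⟨lt, hsto, hcomp⟩ := hRob
  haveI := hsto
  have htri : ∀ x y : X, x ≠ y → lt x y ∨ lt y x := fun x y h => by
    rcases trichotomous_of lt x y with h' | h' | h'
    · exact Or.inl h'
    · exact absurd h' h
    · exact Or.inr h'
  have htrans : ∀ x y z : X, lt x y → lt y z → lt x z := fun _ _ _ h1 h2 => trans_of lt h1 h2
  have hirr : ∀ x : X, ¬ lt x x := fun x => irrefl_of lt x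
  constructor
  · rintro C₁ C₂ ⟨x₁, rfl⟩ ⟨x₂, rfl⟩ hnb₁ hnb₂
    -- each non-block component contains a pair at distance > δ
    have hbig₁ : ∃ u ∈ {y | (Gdelta D δ).Reachable x₁ y},
        ∃ v ∈ {y | (Gdelta D δ).Reachable x₁ y}, δ < D.d u v := by
      by_contra h
      push_neg at h
      exact hnb₁ (aux_block_of_small D h)
    have hbig₂ : ∃ u ∈ {y | (Gdelta D δ).Reachable x₂ y},
        ∃ v ∈ {y | (Gdelta D δ).Reachable x₂ y}, δ < D.d u v := by
      by_contra h
      push_neg at h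
      exact hnb₂ (aux_block_of_small D h)
    obtain ⟨u₁, hu₁, v₁, hv₁, hd₁⟩ := hbig₁
    obtain ⟨u₂, hu₂, v₂, hv₂, hd₂⟩ := hbig₂
    by_contra hne
    -- distinct components are disjoint
    have hdisj : ∀ w : X, (Gdelta D δ).Reachable x₁ w → (Gdelta D δ).Reachable x₂ w → False := by
      intro w h1 h2
      refine hne ?_
      ext y
      constructor
      · intro hy; exact (h2.trans h1.symm).trans hy
      · intro hy; exact (h1.trans h2.symm).trans hy
    have hu₂n : ¬ (Gdelta D δ).Reachable x₁ u₂ := fun h => hdisj u₂ h hu₂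
    have hv₂n : ¬ (Gdelta D δ).Reachable x₁ v₂ := fun h => hdisj v₂ h hv₂
    have hu₁n : ¬ (Gdelta D δ).Reachable x₂ u₁ := fun h => hdisj u₁ hu₁ h
    have h2u := aux_between hcomp htri hδ
      (by rw [D.symm]; exact aux_cross D δ hu₁ hu₂n)
      (by rw [D.symm]; exact aux_cross D δ hv₁ hu₂n) hd₁
    have h2v := aux_between hcomp htri hδ
      (by rw [D.symm]; exact aux_cross D δ hu₁ hv₂n)
      (by rw [D.symm]; exact aux_cross D δ hv₁ hv₂n) hd₁
    have h1u := aux_between hcomp htri hδ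
      (by rw [D.symm]; exact aux_cross D δ hu₂ hu₁n)
      (by rw [D.symm]; exact aux_cross D δ hv₂ hu₁n) hd₂
    rcases h2u with ⟨a1, a2⟩ | ⟨a1, a2⟩ <;> rcases h2v with ⟨b1, b2⟩ | ⟨b1, b2⟩ <;>
      rcases h1u with ⟨c1, c2⟩ | ⟨c1, c2⟩
    · exact hirr _ (htrans _ _ _ a1 c1)
    · exact hirr _ (htrans _ _ _ b1 c1)
    · exact hirr _ (htrans _ _ _ a1 c1)
    · exact hirr _ (htrans _ _ _ c1 (htrans _ _ _ c2 (htrans _ _ _ a2 b1)))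
    · exact hirr _ (htrans _ _ _ c2 (htrans _ _ _ b2 (htrans _ _ _ a1 a2)))
    · exact hirr _ (htrans _ _ _ b1 c1)
    · exact hirr _ (htrans _ _ _ c2 b2)
    · exact hirr _ (htrans _ _ _ c2 a2)
  · rintro C ⟨x₀, rfl⟩ hblock
    have key : ∀ u ∈ {y | (Gdelta D δ).Reachable x₀ y},
        ∀ v ∈ {y | (Gdelta D δ).Reachable x₀ y}, D.d u v ≤ δ := by
      intro u hu v hv
      by_contra h
      push_neg at h
      obtain ⟨z, hz⟩ := aux_outside hnc x₀
      have hb := aux_between hcomp htri hδ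
        (by rw [D.symm]; exact aux_cross D δ hu hz)
        (by rw [D.symm]; exact aux_cross D δ hv hz) h
      have hInt := hblock lt ⟨hsto, hcomp⟩
      rcases hb with ⟨h1, h2⟩ | ⟨h1, h2⟩
      · exact hz (hInt u z v h1 h2 hu hv)
      · exact hz (hInt v z u h1 h2 hv hu)
    refine Real.sSup_le ?_ hδ.le
    rintro r ⟨u, hu, v, hv, rfl⟩
    exact key u hu v hv
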